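/- Let (𝓕_t)_{t≥0} be a filtration on a probability space, let p ≥ 0, α ≥ 0 and B ≥ 1 be real numbers, and let (c_t)_{t≥1} and (I_t)_{t≥1} be sequences of random variables such that c_t and I_t are 𝓕_t-measurable, 0 ≤ c_t ≤ 1, I_t ∈ {0,1}, and E[c_t | 𝓕_{t−1}] ≥ (p + α) − α · E[I_t | 𝓕_{t−1}] almost everywhere for every t ≥ 1. Let τ = inf{t ≥ 1 : Σ_{s=1}^t c_s > B − 1}, and assume τ < ∞ almost surely and E[τ] < ∞. Then (p + α) · E[τ] ≤ B + α · E[Σ_{t=1}^τ I_t]. -/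

import Mathlib

open MeasureTheory Finset Filter Topology

/-- Optional-stopping upper bound on the expected budget-exhaustion time: every round
costs at least `p + α` in conditional expectation unless the indicated (cheap) arm is
pulled, so `(p + α) E[τ] ≤ B + α E[Σ_{t ≤ τ} I_t]`. -/
theorem optional_stopping_budget_bound
    {Ω : Type*} {m0 : MeasurableSpace Ω} (μ : Measure Ω) [IsProbabilityMeasure μ]
    (ℱ : Filtration ℕ m0) (p α B : ℝ) (hp : 0 ≤ p) (hα : 0 ≤ α) (hB : 1 ≤ B)
    (c I : ℕ → Ω → ℝ)
    (hcmeas : ∀ t, 1 ≤ t → Measurable[ℱ t] (c t))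
    (hImeas : ∀ t, 1 ≤ t → Measurable[ℱ t] (I t))
    (hcbdd : ∀ t, 1 ≤ t → ∀ᵐ ω ∂μ, c t ω ∈ Set.Icc (0 : ℝ) 1)
    (hI01 : ∀ t, 1 ≤ t → ∀ᵐ ω ∂μ, I t ω = 0 ∨ I t ω = 1)
    (hdrift : ∀ t, 1 ≤ t → ∀ᵐ ω ∂μ,
      (p + α) - α * (μ[I t | ℱ (t - 1)]) ω ≤ (μ[c t | ℱ (t - 1)]) ω)
    (τ : Ω → ℕ)
    (hτ : ∀ ω, τ ω = sInf {t | 1 ≤ t ∧ B - 1 < ∑ s ∈ Finset.Icc 1 t, c s ω})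
    (hfin : ∀ᵐ ω ∂μ, ∃ t, 1 ≤ t ∧ B - 1 < ∑ s ∈ Finset.Icc 1 t, c s ω)
    (hint : Integrable (fun ω => (τ ω : ℝ)) μ) :
    (p + α) * ∫ ω, (τ ω : ℝ) ∂μ ≤
      B + α * ∫ ω, ∑ s ∈ Finset.Icc 1 (τ ω), I s ω ∂μ := by
  classical
  have hle : ∀ t, ℱ t ≤ m0 := fun t => ℱ.le t
  have measc : ∀ t, 1 ≤ t → Measurable (c t) := fun t ht => (hcmeas t ht).mono (hle t) le_rfl
  have measI : ∀ t, 1 ≤ t → Measurable (I t) := fun t ht => (hImeas t ht).mono (hle t) le_rfl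
  have meassum : ∀ t, Measurable (fun ω => ∑ s ∈ Finset.Icc 1 t, c s ω) := by
    intro t
    exact Finset.measurable_sum _ fun s hs => measc s (Finset.mem_Icc.mp hs).1
  -- measurability of τ
  have measBs : ∀ t : ℕ, MeasurableSet {ω | 1 ≤ t ∧ B - 1 < ∑ s ∈ Finset.Icc 1 t, c s ω} := by
    intro t
    by_cases ht : 1 ≤ t
    · have : {ω | 1 ≤ t ∧ B - 1 < ∑ s ∈ Finset.Icc 1 t, c s ω}
          = {ω | B - 1 < ∑ s ∈ Finset.Icc 1 t, c s ω} := by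
        ext ω; simp [ht]
      rw [this]
      exact measurableSet_lt measurable_const (meassum t)
    · have : {ω | 1 ≤ t ∧ B - 1 < ∑ s ∈ Finset.Icc 1 t, c s ω} = ∅ := by
        ext ω; simp [ht]
      simp [this]
  have measτ : Measurable τ := by
    apply measurable_to_countable'
    intro n
    match n with
    | 0 =>
      have : τ ⁻¹' {0} = ⋂ t, {ω | 1 ≤ t ∧ B - 1 < ∑ s ∈ Finset.Icc 1 t, c s ω}ᶜ := by
        ext ω
        simp only [Set.mem_preimage, Set.mem_singleton_iff, hτ, Set.mem_iInter,
          Set.mem_compl_iff, Set.mem_setOf_eq]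
        constructor
        · intro h t htS
          rcases Nat.sInf_eq_zero.mp h with h0 | hemp
          · exact absurd h0.1 (by norm_num)
          · exact (Set.eq_empty_iff_forall_notMem.mp hemp t) htS
        · intro h
          have he : {t | 1 ≤ t ∧ B - 1 < ∑ s ∈ Finset.Icc 1 t, c s ω} = ∅ :=
            Set.eq_empty_iff_forall_notMem.mpr h
          rw [he]; exact Nat.sInf_empty
      rw [this]
      exact MeasurableSet.iInter fun t => (measBs t).compl
    | Nat.succ n =>
      have : τ ⁻¹' {n + 1} = {ω | 1 ≤ n + 1 ∧ B - 1 < ∑ s ∈ Finset.Icc 1 (n+1), c s ω} ∩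
          ⋂ m ∈ Set.Iio (n + 1), {ω | 1 ≤ m ∧ B - 1 < ∑ s ∈ Finset.Icc 1 m, c s ω}ᶜ := by
        ext ω
        simp only [Set.mem_preimage, Set.mem_singleton_iff, hτ, Set.mem_inter_iff,
          Set.mem_iInter, Set.mem_compl_iff, Set.mem_setOf_eq, Set.mem_Iio]
        constructor
        · intro h
          have hne : {t | 1 ≤ t ∧ B - 1 < ∑ s ∈ Finset.Icc 1 t, c s ω}.Nonempty := by
            by_contra hemp
            rw [Set.not_nonempty_iff_eq_empty] at hemp
            rw [hemp, Nat.sInf_empty] at h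
            omega
          refine ⟨h ▸ Nat.sInf_mem hne, fun m hm => Nat.notMem_of_lt_sInf (h ▸ hm)⟩
        · intro ⟨hmem, hnone⟩
          have h1 : sInf {t | 1 ≤ t ∧ B - 1 < ∑ s ∈ Finset.Icc 1 t, c s ω} ≤ n + 1 :=
            Nat.sInf_le hmem
          have hne : {t | 1 ≤ t ∧ B - 1 < ∑ s ∈ Finset.Icc 1 t, c s ω}.Nonempty := ⟨_, hmem⟩
          have h2 := Nat.sInf_mem hne
          by_contra hne2
          exact hnone _ (lt_of_le_of_ne h1 hne2) h2
      rw [this]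
      exact (measBs (n+1)).inter
        (MeasurableSet.biInter (Set.to_countable _) fun m _ => (measBs m).compl)
  -- integrability of c t, I t
  have intc : ∀ t, 1 ≤ t → Integrable (c t) μ := by
    intro t ht
    refine ⟨(measc t ht).aestronglyMeasurable, ?_⟩
    apply HasFiniteIntegral.of_bounded (C := 1)
    filter_upwards [hcbdd t ht] with ω hω
    rw [Real.norm_eq_abs, abs_le]
    exact ⟨by linarith [hω.1], hω.2⟩
  have intI : ∀ t, 1 ≤ t → Integrable (I t) μ := by
    intro t ht
    refine ⟨(measI t ht).aestronglyMeasurable, ?_⟩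
    apply HasFiniteIntegral.of_bounded (C := 1)
    filter_upwards [hI01 t ht] with ω hω
    rcases hω with h | h <;> rw [Real.norm_eq_abs, h] <;> norm_num
  -- a.e. bounds for all t simultaneously
  have hcae : ∀ᵐ ω ∂μ, ∀ t, 1 ≤ t → 0 ≤ c t ω ∧ c t ω ≤ 1 := by
    rw [ae_all_iff]
    intro t
    by_cases ht : 1 ≤ t
    · filter_upwards [hcbdd t ht] with ω hω _; exact ⟨hω.1, hω.2⟩
    · filter_upwards with ω h; exact absurd h ht
  have hIae : ∀ᵐ ω ∂μ, ∀ t, 1 ≤ t → 0 ≤ I t ω ∧ I t ω ≤ 1 := by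
    rw [ae_all_iff]
    intro t
    by_cases ht : 1 ≤ t
    · filter_upwards [hI01 t ht] with ω hω _
      rcases hω with h | h <;> rw [h] <;> norm_num
    · filter_upwards with ω h; exact absurd h ht
  -- the predictable events
  set A : ℕ → Set Ω :=
    fun t => {ω | ∀ s ∈ Finset.Icc 1 (t-1), ∑ u ∈ Finset.Icc 1 s, c u ω ≤ B - 1} with hA
  have measA : ∀ t, 1 ≤ t → MeasurableSet[ℱ (t-1)] (A t) := by
    intro t ht
    have hrw : A t = ⋂ s ∈ Set.Icc 1 (t-1),
        {ω | ∑ u ∈ Finset.Icc 1 s, c u ω ≤ B - 1} := by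
      ext ω; simp [hA, Finset.mem_Icc, Set.mem_Icc]
    rw [hrw]
    refine MeasurableSet.biInter (Set.to_countable _) ?_
    intro s hs
    rw [Set.mem_Icc] at hs
    have msum : Measurable[ℱ (t-1)] fun ω => ∑ u ∈ Finset.Icc 1 s, c u ω := by
      apply Finset.measurable_sum
      intro u hu
      rw [Finset.mem_Icc] at hu
      exact (hcmeas u hu.1).mono (ℱ.mono (hu.2.trans hs.2)) le_rfl
    exact measurableSet_le msum measurable_const
  -- a.e., A t = {t ≤ τ}
  have hall : ∀ᵐ ω ∂μ, ∀ t, 1 ≤ t → (ω ∈ A t ↔ t ≤ τ ω) := by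
    rw [ae_all_iff]
    intro t
    by_cases ht : 1 ≤ t
    · filter_upwards [hfin] with ω hω _
      have hne : {u | 1 ≤ u ∧ B - 1 < ∑ s ∈ Finset.Icc 1 u, c s ω}.Nonempty := hω
      constructor
      · intro hmem
        by_contra hlt
        push_neg at hlt
        have hτmem : τ ω ∈ {u | 1 ≤ u ∧ B - 1 < ∑ s ∈ Finset.Icc 1 u, c s ω} :=
          (hτ ω) ▸ Nat.sInf_mem hne
        have h1 : τ ω ∈ Finset.Icc 1 (t-1) := Finset.mem_Icc.mpr ⟨hτmem.1, by omega⟩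
        exact absurd (hmem (τ ω) h1) (not_le.mpr hτmem.2)
      · intro hle' s hs
        rw [Finset.mem_Icc] at hs
        by_contra hgt
        push_neg at hgt
        have hmem : s ∈ {u | 1 ≤ u ∧ B - 1 < ∑ v ∈ Finset.Icc 1 u, c v ω} := ⟨hs.1, hgt⟩
        have : τ ω ≤ s := (hτ ω) ▸ Nat.sInf_le hmem
        omega
    · filter_upwards with ω h; exact absurd h ht
  -- budget bound
  have hbudget : ∀ᵐ ω ∂μ, ∑ s ∈ Finset.Icc 1 (τ ω), c s ω ≤ B := by
    filter_upwards [hfin, hcae] with ω hω hc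
    have hne : {u | 1 ≤ u ∧ B - 1 < ∑ s ∈ Finset.Icc 1 u, c s ω}.Nonempty := hω
    have hτmem : τ ω ∈ {u | 1 ≤ u ∧ B - 1 < ∑ s ∈ Finset.Icc 1 u, c s ω} :=
      (hτ ω) ▸ Nat.sInf_mem hne
    have h1τ : 1 ≤ τ ω := hτmem.1
    obtain ⟨m, hm⟩ : ∃ m, τ ω = m + 1 := ⟨τ ω - 1, by omega⟩
    have hsplit : ∑ s ∈ Finset.Icc 1 (τ ω), c s ω
        = ∑ s ∈ Finset.Icc 1 m, c s ω + c (m+1) ω := by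
      rw [hm]
      exact Finset.sum_Icc_succ_top (by omega) _
    have hpre : ∑ s ∈ Finset.Icc 1 m, c s ω ≤ B - 1 := by
      by_cases hm0 : m = 0
      · simp [hm0]; linarith
      · have hmlt : m < τ ω := by omega
        have : m ∉ {u | 1 ≤ u ∧ B - 1 < ∑ s ∈ Finset.Icc 1 u, c s ω} :=
          Nat.notMem_of_lt_sInf ((hτ ω) ▸ hmlt)
        simp only [Set.mem_setOf_eq, not_and, not_lt] at this
        exact this (by omega)
    have := (hc (m+1) (by omega)).2
    linarith [hsplit, hpre]
  -- integrability of ∑_{s ≤ τ} I s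
  have measF : Measurable (fun ω => ∑ s ∈ Finset.Icc 1 (τ ω), I s ω) := by
    have hrw : (fun ω => ∑ s ∈ Finset.Icc 1 (τ ω), I s ω)
        = (fun q : Ω × ℕ => ∑ s ∈ Finset.Icc 1 q.2, I s q.1) ∘ (fun ω => (ω, τ ω)) := rfl
    rw [hrw]
    refine Measurable.comp ?_ (measurable_id.prodMk measτ)
    exact measurable_from_prod_countable_left fun t =>
      Finset.measurable_sum _ fun s hs => measI s (Finset.mem_Icc.mp hs).1
  have hSI_int : Integrable (fun ω => ∑ s ∈ Finset.Icc 1 (τ ω), I s ω) μ := by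
    refine Integrable.mono hint measF.aestronglyMeasurable ?_
    filter_upwards [hIae] with ω hω
    rw [Real.norm_eq_abs, Real.norm_eq_abs, abs_le]
    have h1 : ∑ s ∈ Finset.Icc 1 (τ ω), I s ω ≤ (τ ω : ℝ) := by
      calc ∑ s ∈ Finset.Icc 1 (τ ω), I s ω ≤ ∑ s ∈ Finset.Icc 1 (τ ω), (1:ℝ) :=
            Finset.sum_le_sum fun s hs => (hω s (Finset.mem_Icc.mp hs).1).2
        _ = (τ ω : ℝ) := by
            rw [Finset.sum_const, Nat.card_Icc]
            simp
    have h2 : (0:ℝ) ≤ ∑ s ∈ Finset.Icc 1 (τ ω), I s ω :=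
      Finset.sum_nonneg fun s hs => (hω s (Finset.mem_Icc.mp hs).1).1
    constructor
    · rw [abs_of_nonneg (Nat.cast_nonneg _)]; linarith
    · rw [abs_of_nonneg (Nat.cast_nonneg _)]; exact h1
  -- key per-round inequality
  have key : ∀ t, 1 ≤ t →
      (p+α) * (μ (A t)).toReal ≤ (∫ ω in A t, c t ω ∂μ) + α * ∫ ω in A t, I t ω ∂μ := by
    intro t ht
    have hmle := hle (t-1)
    have h1 : ∫ ω in A t, c t ω ∂μ = ∫ ω in A t, (μ[c t | ℱ (t-1)]) ω ∂μ :=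
      (setIntegral_condExp hmle (intc t ht) (measA t ht)).symm
    have h2 : ∫ ω in A t, I t ω ∂μ = ∫ ω in A t, (μ[I t | ℱ (t-1)]) ω ∂μ :=
      (setIntegral_condExp hmle (intI t ht) (measA t ht)).symm
    have h3 : ∫ ω in A t, ((p+α) - α * (μ[I t | ℱ (t-1)]) ω) ∂μ
        ≤ ∫ ω in A t, (μ[c t | ℱ (t-1)]) ω ∂μ := by
      apply integral_mono_ae
      · exact ((integrable_const (p+α)).sub (integrable_condExp.const_mul α)).restrict
      · exact integrable_condExp.restrict
      · exact ae_restrict_of_ae (hdrift t ht)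
    have h4 : ∫ ω in A t, ((p+α) - α * (μ[I t | ℱ (t-1)]) ω) ∂μ
        = (p+α) * (μ (A t)).toReal - α * ∫ ω in A t, (μ[I t | ℱ (t-1)]) ω ∂μ := by
      rw [integral_sub ((integrable_const (p+α)).restrict)
        ((integrable_condExp.const_mul α).restrict), setIntegral_const, integral_const_mul,
        smul_eq_mul, measureReal_def]
      ring
    rw [h1, h2]
    rw [h4] at h3
    linarith
  -- swap sums and integrals
  have swap : ∀ (f : ℕ → Ω → ℝ), (∀ t, 1 ≤ t → Integrable (f t) μ) → ∀ N : ℕ,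
      ∑ t ∈ Finset.Icc 1 N, ∫ ω in A t, f t ω ∂μ
        = ∫ ω, ∑ t ∈ Finset.Icc 1 N, (A t).indicator (f t) ω ∂μ := by
    intro f hfint N
    rw [integral_finset_sum]
    · refine Finset.sum_congr rfl fun t htm => ?_
      have ht1 := (Finset.mem_Icc.mp htm).1
      rw [integral_indicator (hle (t-1) _ (measA t ht1))]
    · intro t htm
      have ht1 := (Finset.mem_Icc.mp htm).1
      exact (hfint t ht1).indicator (hle (t-1) _ (measA t ht1))
  -- pointwise simplification of indicator sums
  have hsum : ∀ (f : ℕ → Ω → ℝ) (N : ℕ) ω, (∀ t, 1 ≤ t → (ω ∈ A t ↔ t ≤ τ ω)) →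
      ∑ t ∈ Finset.Icc 1 N, (A t).indicator (f t) ω
        = ∑ t ∈ Finset.Icc 1 (min (τ ω) N), f t ω := by
    intro f N ω hω
    have hsub : Finset.Icc 1 (min (τ ω) N) ⊆ Finset.Icc 1 N :=
      Finset.Icc_subset_Icc_right (min_le_right _ _)
    calc ∑ t ∈ Finset.Icc 1 N, (A t).indicator (f t) ω
        = ∑ t ∈ Finset.Icc 1 (min (τ ω) N), (A t).indicator (f t) ω := by
          refine (Finset.sum_subset hsub fun t htm hts => ?_).symm
          rw [Finset.mem_Icc] at htm
          have hnot : ¬ t ≤ τ ω := by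
            rw [Finset.mem_Icc] at hts
            omega
          exact Set.indicator_of_notMem (fun hmem => hnot ((hω t htm.1).mp hmem)) _
      _ = ∑ t ∈ Finset.Icc 1 (min (τ ω) N), f t ω := by
          refine Finset.sum_congr rfl fun t htm => ?_
          rw [Finset.mem_Icc] at htm
          exact Set.indicator_of_mem
            ((hω t htm.1).mpr (htm.2.trans (min_le_left _ _))) _
  -- integrability of indicator sums
  have int_ind : ∀ (f : ℕ → Ω → ℝ), (∀ t, 1 ≤ t → Integrable (f t) μ) → ∀ N : ℕ,
      Integrable (fun ω => ∑ t ∈ Finset.Icc 1 N, (A t).indicator (f t) ω) μ := by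
    intro f hfint N
    apply integrable_finset_sum
    intro t htm
    have ht1 := (Finset.mem_Icc.mp htm).1
    exact (hfint t ht1).indicator (hle (t-1) _ (measA t ht1))
  -- min(τ, N) integrable
  have hmin_int : ∀ N : ℕ, Integrable (fun ω => (min (τ ω) N : ℝ)) μ := by
    intro N
    refine Integrable.mono hint ?_ ?_
    · have hm1 : Measurable (fun ω => ((τ ω : ℝ))) := measurable_from_top.comp measτ
      exact (hm1.min measurable_const).aestronglyMeasurable
    · filter_upwards with ω
      have h0 : (0:ℝ) ≤ min (τ ω : ℝ) (N : ℝ) :=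
        le_min (Nat.cast_nonneg _) (Nat.cast_nonneg _)
      rw [Real.norm_eq_abs, Real.norm_eq_abs, abs_of_nonneg h0,
        abs_of_nonneg (Nat.cast_nonneg _)]
      exact min_le_left _ _
  -- inequality for each N
  have main : ∀ N : ℕ, (p+α) * ∫ ω, (min (τ ω) N : ℝ) ∂μ
      ≤ B + α * ∫ ω, ∑ s ∈ Finset.Icc 1 (τ ω), I s ω ∂μ := by
    intro N
    have h1 : ∑ t ∈ Finset.Icc 1 N, ((p+α) * (μ (A t)).toReal)
        ≤ ∑ t ∈ Finset.Icc 1 N, ((∫ ω in A t, c t ω ∂μ) + α * ∫ ω in A t, I t ω ∂μ) :=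
      Finset.sum_le_sum fun t htm => key t (Finset.mem_Icc.mp htm).1
    rw [Finset.sum_add_distrib, ← Finset.mul_sum, ← Finset.mul_sum] at h1
    -- identify the count term
    have e1 : ∑ t ∈ Finset.Icc 1 N, (μ (A t)).toReal = ∫ ω, (min (τ ω) N : ℝ) ∂μ := by
      have hc1 : ∀ t ∈ Finset.Icc 1 N, (μ (A t)).toReal = ∫ ω in A t, (1:ℝ) ∂μ := by
        intro t _
        rw [setIntegral_const, smul_eq_mul, mul_one, measureReal_def]
      rw [Finset.sum_congr rfl hc1, swap (fun _ => fun _ => (1:ℝ)) (fun _ _ => integrable_const 1) N]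
      apply integral_congr_ae
      filter_upwards [hall] with ω hω
      rw [hsum (fun _ => fun _ => (1:ℝ)) N ω hω, Finset.sum_const, Nat.card_Icc]
      simp
    -- cost bound
    have e2 : ∑ t ∈ Finset.Icc 1 N, ∫ ω in A t, c t ω ∂μ ≤ B := by
      rw [swap c intc N]
      have hB' : ∫ ω, (fun _ => B) ω ∂μ = B := by simp
      rw [← hB']
      apply integral_mono_ae (int_ind c intc N) (integrable_const B)
      filter_upwards [hall, hbudget, hcae] with ω hω hbω hcω
      rw [hsum c N ω hω]
      have hsub : Finset.Icc 1 (min (τ ω) N) ⊆ Finset.Icc 1 (τ ω) :=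
        Finset.Icc_subset_Icc_right (min_le_left _ _)
      calc ∑ t ∈ Finset.Icc 1 (min (τ ω) N), c t ω ≤ ∑ t ∈ Finset.Icc 1 (τ ω), c t ω :=
            Finset.sum_le_sum_of_subset_of_nonneg hsub fun t htm _ =>
              (hcω t (Finset.mem_Icc.mp htm).1).1
        _ ≤ B := hbω
    -- indicator bound
    have e3 : ∑ t ∈ Finset.Icc 1 N, ∫ ω in A t, I t ω ∂μ
        ≤ ∫ ω, ∑ s ∈ Finset.Icc 1 (τ ω), I s ω ∂μ := by
      rw [swap I intI N]
      apply integral_mono_ae (int_ind I intI N) hSI_int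
      filter_upwards [hall, hIae] with ω hω hIω
      rw [hsum I N ω hω]
      exact Finset.sum_le_sum_of_subset_of_nonneg
        (Finset.Icc_subset_Icc_right (min_le_left _ _))
        fun t htm _ => (hIω t (Finset.mem_Icc.mp htm).1).1
    rw [e1] at h1
    have e3' : α * ∑ t ∈ Finset.Icc 1 N, ∫ ω in A t, I t ω ∂μ
        ≤ α * ∫ ω, ∑ s ∈ Finset.Icc 1 (τ ω), I s ω ∂μ :=
      mul_le_mul_of_nonneg_left e3 hα
    linarith
  -- take the limit
  have htend : Tendsto (fun N : ℕ => ∫ ω, min (τ ω : ℝ) (N : ℝ) ∂μ) atTop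
      (𝓝 (∫ ω, (τ ω : ℝ) ∂μ)) := by
    apply integral_tendsto_of_tendsto_of_monotone hmin_int hint
    · filter_upwards with ω
      intro a b hab
      exact min_le_min le_rfl (by exact_mod_cast hab)
    · filter_upwards with ω
      apply tendsto_atTop_of_eventually_const (i₀ := τ ω)
      intro N hN
      rw [min_eq_left (by exact_mod_cast hN)]
  exact le_of_tendsto' (htend.const_mul (p+α)) main
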